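/- Let Q be a quantale, M a Q-module, and N a multiplicative filter of Q that is normal over M. Then N is 1-step over M: for all a, b ∈ M, a ≼_N b implies a ≼¹_N b. -/

import Mathlib

universe u v

/-- A (commutative, integral) quantale: a complete lattice with a commutative monoid
structure whose unit is the top element and whose multiplication distributes over
arbitrary suprema. -/
class IntegralQuantale (Q : Type u) extends CompleteLattice Q, CommMonoid Q where
  one_eq_top : (1 : Q) = ⊤
  mul_sSup : ∀ (a : Q) (S : Set Q), a * sSup S = ⨆ b ∈ S, a * b

/-- A module over a quantale. -/
class QModule (Q : Type u) [IntegralQuantale Q] (M : Type v) extends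
    CompleteLattice M, SMul Q M where
  mul_smul' : ∀ (p q : Q) (m : M), (p * q) • m = p • (q • m)
  top_smul' : ∀ m : M, (⊤ : Q) • m = m
  smul_sSup' : ∀ (q : Q) (S : Set M), S.Nonempty → q • sSup S = ⨆ m ∈ S, q • m
  sSup_smul' : ∀ (S : Set Q) (m : M), S.Nonempty → (⨆ q ∈ S, (q : Q)) • m = ⨆ q ∈ S, q • m

/-- A multiplicative filter of a quantale. -/
def IsMFilter {Q : Type u} [IntegralQuantale Q] (F : Set Q) : Prop :=
  ⊤ ∈ F ∧ (∀ a ∈ F, ∀ b : Q, a ≤ b → b ∈ F) ∧ ∀ a ∈ F, ∀ b ∈ F, a * b ∈ F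

/-- `a ≼¹_F b`: `a` is locally less than `b` in one step; witnessed by a nonempty
family of pairs `(aᵢ, sᵢ)` with `sᵢ ∈ F`, `a ≤ ⨆ aᵢ` and `sᵢ • aᵢ ≤ b`. -/
def stepLE {Q : Type u} {M : Type v} [IntegralQuantale Q] [QModule Q M]
    (F : Set Q) (a b : M) : Prop :=
  ∃ P : Set (M × Q), P.Nonempty ∧ (∀ p ∈ P, p.2 ∈ F) ∧
    (a ≤ ⨆ p ∈ P, Prod.fst p) ∧ ∀ p ∈ P, p.2 • p.1 ≤ b

/-- `a ≼ⁿ_F b`: locally less than in `n` steps. -/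
def nStepLE {Q : Type u} {M : Type v} [IntegralQuantale Q] [QModule Q M]
    (F : Set Q) : ℕ → M → M → Prop
  | 0, a, b => a = b
  | n + 1, a, b => ∃ c : M, stepLE F a c ∧ nStepLE F n c b

/-- `a ≼_F b`: locally less than (in some positive number of steps). -/
def localLE {Q : Type u} {M : Type v} [IntegralQuantale Q] [QModule Q M]
    (F : Set Q) (a b : M) : Prop :=
  ∃ n : ℕ, 1 ≤ n ∧ nStepLE F n a b

/-- A complete lattice is shrinkable if every inequality `x ≤ ⨆ xᵢ` can be shrunk
to an equality `x = ⨆ yⱼ` with each `yⱼ` below a finite subsupremum of the `xᵢ`. -/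
def Shrinkable (L : Type u) [CompleteLattice L] : Prop :=
  ∀ (x : L) (S : Set L), S.Nonempty → x ≤ sSup S →
    ∃ Y : Set L, Y.Nonempty ∧ x = sSup Y ∧
      ∀ y ∈ Y, ∃ T : Finset L, T.Nonempty ∧ ↑T ⊆ S ∧ y ≤ T.sup id

/-- An m-filter `N` is normal over `M`: whenever `s ∈ N` and `s • m ≤ ⨆ S` for a
nonempty `S ⊆ M`, there is a nonempty family of pairs `(m´ⱼ, sⱼ)` with `sⱼ ∈ N`,
`m ≤ ⨆ m´ⱼ`, and each `sⱼ • m´ⱼ` below a finite subsupremum of `S`. -/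
def IsNormalOver {Q : Type u} [IntegralQuantale Q] (M : Type v) [QModule Q M]
    (N : Set Q) : Prop :=
  ∀ s ∈ N, ∀ m : M, ∀ S : Set M, S.Nonempty → s • m ≤ sSup S →
    ∃ P : Set (M × Q), P.Nonempty ∧ (m ≤ ⨆ p ∈ P, Prod.fst p) ∧
      ∀ p ∈ P, p.2 ∈ N ∧
        ∃ S₀ : Finset M, S₀.Nonempty ∧ ↑S₀ ⊆ S ∧ p.2 • p.1 ≤ S₀.sup id

section Aux

variable {Q : Type u} {M : Type v} [IntegralQuantale Q] [QModule Q M]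

lemma q_mul_le_left (a b : Q) : a * b ≤ a := by
  have h := IntegralQuantale.mul_sSup a {b, ⊤}
  have h2 : sSup ({b, ⊤} : Set Q) = ⊤ := by simp
  rw [h2] at h
  have h3 : (⨆ c ∈ ({b, ⊤} : Set Q), a * c) = (a * b) ⊔ (a * ⊤) := by
    simp [iSup_or, iSup_sup_eq, sSup_pair]
  rw [h3] at h
  have : a * ⊤ = a := by
    rw [← IntegralQuantale.one_eq_top, mul_one]
  rw [this] at h
  calc a * b ≤ (a * b) ⊔ a := le_sup_left
    _ = a := h.symm

lemma smul_mono_q {q q' : Q} (m : M) (h : q ≤ q') : q • m ≤ q' • m := by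
  have hs := QModule.sSup_smul' ({q, q'} : Set Q) m ⟨q, by simp⟩
  have h1 : (⨆ x ∈ ({q, q'} : Set Q), (x : Q)) = q' := by
    simp [iSup_or, iSup_sup_eq, sup_eq_right.mpr h]
  have h2 : (⨆ x ∈ ({q, q'} : Set Q), x • m) = (q • m) ⊔ (q' • m) := by
    simp [iSup_or, iSup_sup_eq]
  rw [h1, h2] at hs
  rw [hs]; exact le_sup_left

lemma smul_mono_m (q : Q) {m m' : M} (h : m ≤ m') : q • m ≤ q • m' := by
  have hs := QModule.smul_sSup' q ({m, m'} : Set M) ⟨m, by simp⟩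
  have h1 : sSup ({m, m'} : Set M) = m' := by
    simp [sSup_pair, sup_eq_right.mpr h]
  have h2 : (⨆ x ∈ ({m, m'} : Set M), q • x) = (q • m) ⊔ (q • m') := by
    simp [iSup_or, iSup_sup_eq]
  rw [h1, h2] at hs
  rw [hs]; exact le_sup_left

lemma one_mem_mfilter {N : Set Q} (hN : IsMFilter N) : (1 : Q) ∈ N := by
  rw [IntegralQuantale.one_eq_top]; exact hN.1

lemma prod_mem_mfilter {N : Set Q} (hN : IsMFilter N) (g : M → Q) :
    ∀ T : Finset M, (∀ m ∈ T, g m ∈ N) → T.prod g ∈ N := by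
  classical
  intro T hg
  induction T using Finset.induction_on with
  | empty => simpa using one_mem_mfilter hN
  | insert _ _ hx ih =>
    rw [Finset.prod_insert hx]
    exact hN.2.2 _ (hg _ (Finset.mem_insert_self _ _)) _
      (ih (fun m hm => hg m (Finset.mem_insert_of_mem hm)))

/-- The key characterization of `stepLE`. -/
lemma stepLE_iff {N : Set Q} (hN : IsMFilter N) (a b : M) :
    stepLE N a b ↔ a ≤ sSup {m : M | ∃ q ∈ N, q • m ≤ b} := by
  constructor
  · rintro ⟨P, _, hPN, ha, hPb⟩
    refine ha.trans (iSup_le fun p => iSup_le fun hp => le_sSup ?_)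
    exact ⟨p.2, hPN p hp, hPb p hp⟩
  · intro ha
    refine ⟨{p : M × Q | p.2 ∈ N ∧ p.2 • p.1 ≤ b}, ⟨(b, ⊤), hN.1, by
      rw [QModule.top_smul']⟩, fun p hp => hp.1, ?_, fun p hp => hp.2⟩
    refine ha.trans (sSup_le fun m hm => ?_)
    obtain ⟨q, hq, hqm⟩ := hm
    exact le_iSup_of_le (m, q) (by simp [hq, hqm])

lemma stepLE_trans {N : Set Q} (hN : IsMFilter N) (hnorm : IsNormalOver M N)
    {a c b : M} (h1 : stepLE N a c) (h2 : stepLE N c b) : stepLE N a b := by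
  classical
  obtain ⟨PA, _, hPAN, haA, hPAc⟩ := h1
  obtain ⟨PC, hPCne, hPCN, hcC, hPCb⟩ := h2
  rw [stepLE_iff hN]
  -- the set S of "pieces" of c
  set S : Set M := Prod.fst '' PC with hS
  have hSne : S.Nonempty := hPCne.image _
  have hcS : c ≤ sSup S := by
    refine hcC.trans (iSup_le fun p => iSup_le fun hp => le_sSup ?_)
    exact ⟨p, hp, rfl⟩
  -- choice function: for each m ∈ S, a q ∈ N with q • m ≤ b
  have hgood : ∀ m ∈ S, ∃ q, q ∈ N ∧ q • m ≤ b := by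
    rintro m ⟨p, hp, rfl⟩
    exact ⟨p.2, hPCN p hp, hPCb p hp⟩
  set g : M → Q := fun m => if h : ∃ q, q ∈ N ∧ q • m ≤ b then h.choose else ⊤ with hgdef
  have hgN : ∀ m ∈ S, g m ∈ N := by
    intro m hm
    have h := hgood m hm
    simp only [hgdef, dif_pos h]
    exact h.choose_spec.1
  have hgb : ∀ m ∈ S, g m • m ≤ b := by
    intro m hm
    have h := hgood m hm
    simp only [hgdef, dif_pos h]
    exact h.choose_spec.2
  refine haA.trans (iSup_le fun pa => iSup_le fun hpa => ?_)
  -- apply normality to pa.2 • pa.1 ≤ sSup S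
  have hle : pa.2 • pa.1 ≤ sSup S := (hPAc pa hpa).trans hcS
  obtain ⟨P, hPne, hP1, hP2⟩ := hnorm pa.2 (hPAN pa hpa) pa.1 S hSne hle
  refine hP1.trans (iSup_le fun p => iSup_le fun hp => le_sSup ?_)
  obtain ⟨hp2N, S₀, hS₀ne, hS₀S, hS₀le⟩ := hP2 p hp
  -- t = product of g over S₀
  set t : Q := S₀.prod g with ht
  have htN : t ∈ N := prod_mem_mfilter hN g S₀ (fun m hm => hgN m (hS₀S hm))
  have ht_le : ∀ m ∈ S₀, t ≤ g m := by
    intro m hm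
    rw [ht, ← Finset.mul_prod_erase S₀ g hm]
    exact q_mul_le_left _ _
  -- t • S₀.sup id ≤ b
  have htb : t • S₀.sup id ≤ b := by
    have hsup : S₀.sup id = sSup (↑S₀ : Set M) := by
      rw [sSup_eq_iSup]
      simp [Finset.sup_eq_iSup]
    rw [hsup, QModule.smul_sSup' t _ (by exact_mod_cast hS₀ne)]
    refine iSup_le fun m => iSup_le fun hm => ?_
    have hm' : m ∈ S₀ := by exact_mod_cast hm
    exact (smul_mono_q m (ht_le m hm')).trans (hgb m (hS₀S hm'))
  refine ⟨t * p.2, hN.2.2 _ htN _ hp2N, ?_⟩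
  rw [QModule.mul_smul']
  exact (smul_mono_m t hS₀le).trans htb

end Aux

/-- A normal m-filter is 1-step: `a ≼_N b` implies `a ≼¹_N b`. -/
theorem normal_implies_oneStep {Q : Type u} {M : Type v}
    [IntegralQuantale Q] [QModule Q M]
    (N : Set Q) (hN : IsMFilter N) (hnorm : IsNormalOver M N) :
    ∀ a b : M, localLE N a b → stepLE N a b := by
  have key : ∀ n : ℕ, ∀ a b : M, 1 ≤ n → nStepLE N n a b → stepLE N a b := by
    intro n
    induction n with
    | zero => intro a b h; omega
    | succ n ih =>
      intro a b _ hn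
      obtain ⟨c, hac, hcb⟩ := hn
      match n, hcb with
      | 0, hcb => exact hcb ▸ hac
      | (m + 1), hcb =>
        exact stepLE_trans hN hnorm hac (ih c b (Nat.succ_le_succ (Nat.zero_le m)) hcb)
  rintro a b ⟨n, hn1, hn⟩
  exact key n a b hn1 hn
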